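/- Let Γ = (V, H, s, ι, ρ) be a ribbon graph with every fiber s⁻¹(v) finite, n_v = val(v), fix a cutting {φ_v}, and define the ℤ-cover Γ^{ℤ} = (V, H × ℤ, s̃, ι̃, ρ̃) by s̃(h, j) = s(h), ι̃(h, j) = (ι(h), j), and for s(h) = v with h = φ_v(i): ρ̃(h, j) = (φ_v(i+1), j) if i < n_v − 1, and ρ̃(h, j) = (φ_v(0), j+1) if i = n_v − 1. Then Γ^{ℤ} is a ribbon graph (ρ̃ is a bijection whose orbits are exactly the fibers s̃⁻¹(v) = s⁻¹(v) × ℤ). Moreover, if d(v) = n_v for every v, then (Γ^{ℤ}, d) satisfies the AFBG axioms, its Nakayama map satisfies ν̃^{k}(h, j) = (h, j+k) for every integer k, and the ⟨ν̃⟩-action on H × ℤ is free: ν̃^{k}(x) = x implies k = 0. -/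

import Mathlib

/-- A ribbon graph: vertices `V`, half-edges `H`, source map `s`,
fixed-point-free involution `ι`, and a permutation `ρ` whose orbits are
exactly the fibers `s⁻¹(v)`. -/
structure RibbonGraph (V H : Type*) where
  s : H → V
  ι : H → H
  ρ : Equiv.Perm H
  ι_invol : ∀ h, ι (ι h) = h
  ι_ne : ∀ h, ι h ≠ h
  s_surj : Function.Surjective s
  s_ρ : ∀ h, s (ρ h) = s h
  ρ_trans : ∀ h h', s h = s h' → ∃ k : ℤ, (ρ ^ k) h = h'

/-- A cutting of a ribbon graph with finite fibers: for each vertex `v` a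
bijection `φ v : Fin (n v) → s⁻¹(v)` enumerating the fiber compatibly with
`ρ`, i.e. `ρ(φ v i) = φ v (i+1)` for `i + 1 < n v`. -/
structure Cutting {V H : Type*} (Γ : RibbonGraph V H) where
  n : V → ℕ
  φ : ∀ v, Fin (n v) → H
  φ_s : ∀ v i, Γ.s (φ v i) = v
  φ_inj : ∀ v, Function.Injective (φ v)
  φ_surj : ∀ v h, Γ.s h = v → ∃ i, φ v i = h
  φ_ρ : ∀ (v) (i : Fin (n v)) (hi : (i : ℕ) + 1 < n v),
      Γ.ρ (φ v i) = φ v ⟨(i : ℕ) + 1, hi⟩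

/-- The index of a half-edge in the enumeration of its fiber. -/
noncomputable def Cutting.idx {V H : Type*} {Γ : RibbonGraph V H}
    (C : Cutting Γ) (h : H) : Fin (C.n (Γ.s h)) :=
  (C.φ_surj (Γ.s h) h rfl).choose

/-- The permutation `ρ̃` of the cover with half-edge set `H × J`
(for `J = ℤ/rℤ` or `J = ℤ`): with `s(h) = v` and `h = φ_v(i)`,
`ρ̃(h, j) = (φ_v(i+1), j)` if `i < n_v − 1`, and
`ρ̃(h, j) = (φ_v(0), j+1)` if `i = n_v − 1`. -/
noncomputable def coverRho {V H : Type*} {Γ : RibbonGraph V H} (C : Cutting Γ)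
    {J : Type*} [Add J] [One J] : H × J → H × J :=
  fun x =>
    if hlt : (C.idx x.1 : ℕ) + 1 < C.n (Γ.s x.1) then
      (C.φ (Γ.s x.1) ⟨(C.idx x.1 : ℕ) + 1, hlt⟩, x.2)
    else
      (C.φ (Γ.s x.1) ⟨0, Nat.lt_of_le_of_lt (Nat.zero_le _) (C.idx x.1).isLt⟩, x.2 + 1)
section Aux
variable {V H : Type*} {Γ : RibbonGraph V H} (C : Cutting Γ)

lemma Cutting.idx_spec (h : H) : C.φ (Γ.s h) (C.idx h) = h :=
  (C.φ_surj (Γ.s h) h rfl).choose_spec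

lemma Cutting.phi_congr' {v w : V} (hvw : v = w) {a b : ℕ} (hab : a = b)
    (ha : a < C.n v) (hb : b < C.n w) :
    C.φ v ⟨a, ha⟩ = C.φ w ⟨b, hb⟩ := by subst hvw; subst hab; rfl

lemma Cutting.phi_val_inj {v w : V} (hvw : v = w) (i : Fin (C.n v)) (k : Fin (C.n w))
    (he : C.φ v i = C.φ w k) : (i : ℕ) = (k : ℕ) := by
  subst hvw; exact congrArg Fin.val (C.φ_inj v he)

lemma Cutting.idx_phi {v : V} (i : Fin (C.n v)) : (C.idx (C.φ v i) : ℕ) = (i : ℕ) :=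
  C.phi_val_inj (C.φ_s v i) _ i (C.idx_spec (C.φ v i))

lemma divmod_q {n q r : ℤ} (hn : 0 < n) (hr0 : 0 ≤ r) (hrn : r < n) :
    (r + n * q) / n = q := by
  rw [Int.add_mul_ediv_left r q hn.ne', Int.ediv_eq_zero_of_lt hr0 hrn, zero_add]

lemma divmod_r {n q r : ℤ} (hn : 0 < n) (hr0 : 0 ≤ r) (hrn : r < n) :
    (r + n * q) % n = r := by
  rw [Int.add_mul_emod_self_left, Int.emod_eq_of_lt hr0 hrn]

/-- Encoding of the fiber `s⁻¹(v) × ℤ` by integers. -/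
noncomputable def enc (v : V) (hv : 0 < C.n v) (t : ℤ) : H × ℤ :=
  (C.φ v ⟨(t % (C.n v : ℤ)).toNat, by
      have h1 : 0 ≤ t % (C.n v : ℤ) :=
        Int.emod_nonneg t (by exact_mod_cast hv.ne')
      have h2 : t % (C.n v : ℤ) < (C.n v : ℤ) :=
        Int.emod_lt_of_pos t (by exact_mod_cast hv)
      omega⟩, t / (C.n v : ℤ))

lemma enc_mk (v : V) (hv : 0 < C.n v) (a : ℕ) (ha : a < C.n v) (q : ℤ) :
    enc C v hv ((a : ℤ) + (C.n v : ℤ) * q) = (C.φ v ⟨a, ha⟩, q) := by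
  have hnz : (0:ℤ) < (C.n v : ℤ) := by exact_mod_cast hv
  have h1 : ((a:ℤ) + (C.n v:ℤ)*q) % (C.n v:ℤ) = (a:ℤ) :=
    divmod_r hnz (by positivity) (by exact_mod_cast ha)
  have h2 : ((a:ℤ) + (C.n v:ℤ)*q) / (C.n v:ℤ) = q :=
    divmod_q hnz (by positivity) (by exact_mod_cast ha)
  refine Prod.ext ?_ h2
  exact C.phi_congr' rfl (by omega) _ _

lemma enc_self (v : V) (hv : 0 < C.n v) (h : H) (hs : Γ.s h = v) (j : ℤ) :
    enc C v hv ((C.idx h : ℤ) + (C.n v : ℤ) * j) = (h, j) := by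
  subst hs
  rw [enc_mk C _ hv (C.idx h : ℕ) (C.idx h).isLt j]
  rw [show (⟨(C.idx h : ℕ), (C.idx h).isLt⟩ : Fin (C.n (Γ.s h))) = C.idx h from rfl,
    C.idx_spec]

lemma coverRho_mk (h : H) (j : ℤ) :
    coverRho C ((h, j) : H × ℤ) =
      if hlt : (C.idx h : ℕ) + 1 < C.n (Γ.s h) then
        (C.φ (Γ.s h) ⟨(C.idx h : ℕ) + 1, hlt⟩, j)
      else
        (C.φ (Γ.s h) ⟨0, Nat.lt_of_le_of_lt (Nat.zero_le _) (C.idx h).isLt⟩, j + 1) := rfl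

lemma rho_enc (v : V) (hv : 0 < C.n v) (t : ℤ) :
    coverRho C (enc C v hv t) = enc C v hv (t + 1) := by
  have hnz : (0:ℤ) < (C.n v : ℤ) := by exact_mod_cast hv
  obtain ⟨q, r, hr0, hrn, rfl⟩ :
      ∃ q r : ℤ, 0 ≤ r ∧ r < (C.n v : ℤ) ∧ t = r + (C.n v : ℤ) * q :=
    ⟨t / (C.n v : ℤ), t % (C.n v : ℤ), Int.emod_nonneg t hnz.ne',
      Int.emod_lt_of_pos t hnz, (Int.emod_add_mul_ediv t (C.n v : ℤ)).symm⟩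
  obtain ⟨rn, rfl⟩ : ∃ rn : ℕ, (rn : ℤ) = r := ⟨r.toNat, Int.toNat_of_nonneg hr0⟩
  have hrnn : rn < C.n v := by exact_mod_cast hrn
  rw [enc_mk C v hv rn hrnn q, coverRho_mk]
  have hs : Γ.s (C.φ v ⟨rn, hrnn⟩) = v := C.φ_s v _
  have hidx : (C.idx (C.φ v ⟨rn, hrnn⟩) : ℕ) = rn := C.idx_phi _
  have hnn : C.n (Γ.s (C.φ v ⟨rn, hrnn⟩)) = C.n v := congrArg C.n hs
  by_cases hlt : (C.idx (C.φ v ⟨rn, hrnn⟩) : ℕ) + 1 < C.n (Γ.s (C.φ v ⟨rn, hrnn⟩))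
  · rw [dif_pos hlt]
    have h' : rn + 1 < C.n v := by omega
    rw [show ((rn : ℤ) + (C.n v : ℤ) * q + 1) = (((rn + 1 : ℕ) : ℤ) + (C.n v : ℤ) * q) by
      push_cast; ring]
    rw [enc_mk C v hv (rn + 1) h' q]
    exact Prod.ext (C.phi_congr' hs (by omega) _ _) rfl
  · rw [dif_neg hlt]
    have h1 : rn + 1 = C.n v := by
      have := (C.idx (C.φ v ⟨rn, hrnn⟩)).isLt
      omega
    have h1' : (rn : ℤ) + 1 = (C.n v : ℤ) := by exact_mod_cast h1
    rw [show ((rn : ℤ) + (C.n v : ℤ) * q + 1) = (((0 : ℕ) : ℤ) + (C.n v : ℤ) * (q + 1)) by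
      push_cast; linear_combination h1']
    rw [enc_mk C v hv 0 hv (q + 1)]
    exact Prod.ext (C.phi_congr' hs rfl _ _) rfl

end Aux
/-- the ℤ-cover Γ^{ℤ} = (V, H × ℤ, s̃, ι̃, ρ̃) is a ribbon graph
(ρ̃ is a bijection whose orbits are exactly the fibers s⁻¹(v) × ℤ). Moreover,
with d(v) = n_v = val(v), (Γ^{ℤ}, d) satisfies the AFBG axioms, its Nakayama
map satisfies ν̃^k(h, j) = (h, j+k) for every integer k, and the ⟨ν̃⟩-action
on H × ℤ is free. Here ρZ is the permutation ρ̃ and νZ its Nakayama map. -/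
theorem stmt15 {V H : Type*} (Γ : RibbonGraph V H) (C : Cutting Γ)
    (ρZ : Equiv.Perm (H × ℤ)) (hρZ : ∀ x, ρZ x = coverRho C x)
    (νZ : Equiv.Perm (H × ℤ))
    (hνZ : ∀ x : H × ℤ, νZ x = (ρZ ^ (C.n (Γ.s x.1) : ℤ)) x) :
    Function.Bijective (coverRho C : H × ℤ → H × ℤ) ∧
    (∃ G : RibbonGraph V (H × ℤ),
      (∀ x, G.s x = Γ.s x.1) ∧
      (∀ x : H × ℤ, G.ι x = (Γ.ι x.1, x.2)) ∧
      (∀ x, G.ρ x = coverRho C x)) ∧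
    (∀ x : H × ℤ,
      ((Γ.ι ((ρZ ^ (C.n (Γ.s x.1) : ℤ)) x).1, ((ρZ ^ (C.n (Γ.s x.1) : ℤ)) x).2)
          : H × ℤ)
        = (ρZ ^ (C.n (Γ.s (Γ.ι x.1)) : ℤ)) (Γ.ι x.1, x.2)) ∧
    (∀ (x : H × ℤ) (m : ℤ),
      (ρZ ^ (m * (C.n (Γ.s x.1) : ℤ))) x ≠ ((Γ.ι x.1, x.2) : H × ℤ)) ∧
    (∀ (h : H) (j k : ℤ), (νZ ^ k) ((h, j) : H × ℤ) = (h, j + k)) ∧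
    (∀ (x : H × ℤ) (k : ℤ), (νZ ^ k) x = x → k = 0) := by
  have hfun : (coverRho C : H × ℤ → H × ℤ) = ⇑ρZ := funext fun x => (hρZ x).symm
  have hρenc : ∀ (v : V) (hv : 0 < C.n v) (t : ℤ),
      ρZ (enc C v hv t) = enc C v hv (t + 1) :=
    fun v hv t => (hρZ _).trans (rho_enc C v hv t)
  have hρinv : ∀ (v : V) (hv : 0 < C.n v) (t : ℤ),
      ρZ⁻¹ (enc C v hv t) = enc C v hv (t - 1) := by
    intro v hv t
    have h1 := hρenc v hv (t - 1)
    rw [sub_add_cancel] at h1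
    rw [← h1, ← Equiv.Perm.mul_apply, inv_mul_cancel, Equiv.Perm.one_apply]
  have hkey : ∀ (k : ℤ) (v : V) (hv : 0 < C.n v) (t : ℤ),
      (ρZ ^ k) (enc C v hv t) = enc C v hv (t + k) := by
    intro k
    induction k using Int.induction_on with
    | zero => simp
    | succ k ih =>
      intro v hv t
      rw [zpow_add_one, Equiv.Perm.mul_apply, hρenc, ih]
      congr 1; ring
    | pred k ih =>
      intro v hv t
      rw [zpow_sub_one, Equiv.Perm.mul_apply, hρinv, ih]
      congr 1; ring
  have hmk : ∀ (h : H) (j k : ℤ),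
      (ρZ ^ k) ((h, j) : H × ℤ) =
        enc C (Γ.s h) (C.idx h).pos ((C.idx h : ℤ) + (C.n (Γ.s h) : ℤ) * j + k) := by
    intro h j k
    rw [← enc_self C (Γ.s h) (C.idx h).pos h rfl j, hkey]
  have stepn : ∀ (h : H) (j : ℤ),
      (ρZ ^ ((C.n (Γ.s h) : ℤ))) ((h, j) : H × ℤ) = (h, j + 1) := by
    intro h j
    rw [hmk, show (C.idx h : ℤ) + (C.n (Γ.s h) : ℤ) * j + (C.n (Γ.s h) : ℤ)
        = (C.idx h : ℤ) + (C.n (Γ.s h) : ℤ) * (j + 1) by ring]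
    exact enc_self C (Γ.s h) (C.idx h).pos h rfl (j + 1)
  have stepAdd : ∀ (h : H) (j m : ℤ),
      (ρZ ^ (m * (C.n (Γ.s h) : ℤ))) ((h, j) : H × ℤ) = (h, j + m) := by
    intro h j m
    rw [hmk, show (C.idx h : ℤ) + (C.n (Γ.s h) : ℤ) * j + m * (C.n (Γ.s h) : ℤ)
        = (C.idx h : ℤ) + (C.n (Γ.s h) : ℤ) * (j + m) by ring]
    exact enc_self C (Γ.s h) (C.idx h).pos h rfl (j + m)
  have hν1 : ∀ (h : H) (j : ℤ), νZ ((h, j) : H × ℤ) = (h, j + 1) :=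
    fun h j => (hνZ (h, j)).trans (stepn h j)
  have hνinv : ∀ (h : H) (j : ℤ), νZ⁻¹ ((h, j) : H × ℤ) = (h, j - 1) := by
    intro h j
    have h1 := hν1 h (j - 1)
    rw [sub_add_cancel] at h1
    rw [← h1, ← Equiv.Perm.mul_apply, inv_mul_cancel, Equiv.Perm.one_apply]
  have hνpow : ∀ (k : ℤ) (h : H) (j : ℤ), (νZ ^ k) ((h, j) : H × ℤ) = (h, j + k) := by
    intro k
    induction k using Int.induction_on with
    | zero => simp
    | succ k ih =>
      intro h j
      rw [zpow_add_one, Equiv.Perm.mul_apply, hν1, ih]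
      congr 1; ring
    | pred k ih =>
      intro h j
      rw [zpow_sub_one, Equiv.Perm.mul_apply, hνinv, ih]
      congr 1; ring
  refine ⟨?_, ?_, ?_, ?_, ?_, ?_⟩
  · rw [hfun]; exact ρZ.bijective
  · refine ⟨⟨fun x => Γ.s x.1, fun x => (Γ.ι x.1, x.2), ρZ, ?_, ?_, ?_, ?_, ?_⟩,
      fun _ => rfl, fun _ => rfl, hρZ⟩
    · intro x; dsimp only; rw [Γ.ι_invol]
    · intro x hx; exact Γ.ι_ne x.1 (congrArg Prod.fst hx)
    · intro v
      obtain ⟨h, hh⟩ := Γ.s_surj v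
      exact ⟨(h, 0), hh⟩
    · intro x
      obtain ⟨h, j⟩ := x
      have h1 := hmk h j 1
      rw [zpow_one] at h1
      rw [h1]
      exact C.φ_s _ _
    · intro x x' hs
      obtain ⟨h, j⟩ := x
      obtain ⟨h', j'⟩ := x'
      dsimp only at hs
      refine ⟨((C.idx h' : ℤ) + (C.n (Γ.s h) : ℤ) * j')
        - ((C.idx h : ℤ) + (C.n (Γ.s h) : ℤ) * j), ?_⟩
      rw [hmk, show (C.idx h : ℤ) + (C.n (Γ.s h) : ℤ) * j
          + (((C.idx h' : ℤ) + (C.n (Γ.s h) : ℤ) * j')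
            - ((C.idx h : ℤ) + (C.n (Γ.s h) : ℤ) * j))
          = (C.idx h' : ℤ) + (C.n (Γ.s h) : ℤ) * j' by ring]
      exact enc_self C (Γ.s h) (C.idx h).pos h' hs.symm j'
  · intro x
    obtain ⟨h, j⟩ := x
    dsimp only
    rw [stepn h j, stepn (Γ.ι h) j]
  · intro x m
    obtain ⟨h, j⟩ := x
    dsimp only
    rw [stepAdd h j m]
    intro he
    exact Γ.ι_ne h (congrArg Prod.fst he).symm
  · intro h j k; exact hνpow k h j
  · intro x k hk
    obtain ⟨h, j⟩ := x
    rw [hνpow k h j] at hk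
    have := congrArg Prod.snd hk
    dsimp only at this
    omega
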